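/- Let ρ₁, ρ₂ ∈ ℂ and let ω ∈ ℂ with |ω| = 1. Then the 3×3 Hermitian matrix v with rows (1, 0, conj(ρ₁)·conj(ω)), (0, 1, conj(ρ₂)·conj(ω)), (ρ₁·ω, ρ₂·ω, 1 + |ρ₁|² + |ρ₂|²) is positive definite. In particular, the jump matrix v(x,t,k) of the Sasa–Satsuma Riemann–Hilbert problem (obtained with ω = e^{2ikx - 8ik³t}) is Hermitian and positive definite for every k ∈ ℝ. -/

import Mathlib

open Complex Matrix ComplexConjugate
open scoped ComplexOrder

noncomputable section

/-- The jump matrix with unimodular factor `ω`. -/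
def vmat (ρ₁ ρ₂ ω : ℂ) : Matrix (Fin 3) (Fin 3) ℂ :=
  !![1, 0, conj ρ₁ * conj ω;
     0, 1, conj ρ₂ * conj ω;
     ρ₁ * ω, ρ₂ * ω, 1 + (Complex.normSq ρ₁ : ℂ) + (Complex.normSq ρ₂ : ℂ)]

/-- The phase `θ(x,t,k) = 2ikx - 8ik³t`. -/
def theta (x t k : ℝ) : ℂ :=
  2 * Complex.I * (k : ℂ) * (x : ℂ) - 8 * Complex.I * (k : ℂ) ^ 3 * (t : ℂ)

lemma vmat_herm (ρ₁ ρ₂ ω : ℂ) : (vmat ρ₁ ρ₂ ω).IsHermitian := by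
  unfold Matrix.IsHermitian
  ext i j
  fin_cases i <;> fin_cases j <;>
    simp [vmat, Matrix.conjTranspose_apply, map_add, Complex.conj_ofReal]

lemma vmat_posdef (ρ₁ ρ₂ ω : ℂ) (hω : ‖ω‖ = 1) : (vmat ρ₁ ρ₂ ω).PosDef := by
  have hωω : conj ω * ω = 1 := by
    have := Complex.normSq_eq_norm_sq ω
    rw [hω] at this
    rw [mul_comm, Complex.mul_conj, this]; norm_num
  refine Matrix.posDef_iff_dotProduct_mulVec.2 ⟨vmat_herm ρ₁ ρ₂ ω, fun x hx => ?_⟩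
  set a := x 0; set b := x 1; set c := x 2
  have key : star x ⬝ᵥ (vmat ρ₁ ρ₂ ω).mulVec x =
      ((Complex.normSq (a + conj ρ₁ * conj ω * c) +
        Complex.normSq (b + conj ρ₂ * conj ω * c) + Complex.normSq c : ℝ) : ℂ) := by
    push_cast
    simp only [← Complex.mul_conj]
    simp [dotProduct, Matrix.mulVec, Fin.sum_univ_three, vmat, a, b, c]
    rw [← Complex.mul_conj ρ₁, ← Complex.mul_conj ρ₂]
    linear_combination (-conj (x 2) * x 2 * (ρ₁ * conj ρ₁ + ρ₂ * conj ρ₂)) * hωω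
  rw [key]
  have hpos : 0 < Complex.normSq (a + conj ρ₁ * conj ω * c) +
      Complex.normSq (b + conj ρ₂ * conj ω * c) + Complex.normSq c := by
    rcases eq_or_ne c 0 with hc | hc
    · simp only [hc, mul_zero, add_zero, Complex.normSq_zero]
      have : a ≠ 0 ∨ b ≠ 0 := by
        by_contra h
        push_neg at h
        apply hx
        ext i
        fin_cases i
        exacts [h.1, h.2, hc]
      rcases this with h | h
      · have := Complex.normSq_pos.2 h
        have := Complex.normSq_nonneg b
        linarith
      · have := Complex.normSq_pos.2 h
        have := Complex.normSq_nonneg a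
        linarith
    · have := Complex.normSq_pos.2 hc
      have h1 := Complex.normSq_nonneg (a + conj ρ₁ * conj ω * c)
      have h2 := Complex.normSq_nonneg (b + conj ρ₂ * conj ω * c)
      linarith
  exact_mod_cast Complex.zero_lt_real.2 hpos


lemma theta_re (x t k : ℝ) : (theta x t k).re = 0 := by
  simp [theta, ← Complex.ofReal_pow]

/-- For `|ω| = 1` the Hermitian matrix `v` is positive definite; in particular, the jump
matrix of the Sasa–Satsuma Riemann–Hilbert problem (with `ω = e^{2ikx-8ik³t}`) is Hermitian
and positive definite for every `k ∈ ℝ`. -/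
theorem jump_matrix_posDef (ρ₁ ρ₂ : ℂ) :
    (∀ ω : ℂ, ‖ω‖ = 1 →
      (vmat ρ₁ ρ₂ ω).IsHermitian ∧ (vmat ρ₁ ρ₂ ω).PosDef) ∧
    (∀ x t k : ℝ,
      (vmat ρ₁ ρ₂ (Complex.exp (theta x t k))).IsHermitian ∧
      (vmat ρ₁ ρ₂ (Complex.exp (theta x t k))).PosDef) := by
  constructor
  · exact fun ω hω => ⟨vmat_herm ρ₁ ρ₂ ω, vmat_posdef ρ₁ ρ₂ ω hω⟩
  · intro x t k
    have hω : ‖(Complex.exp (theta x t k))‖ = 1 := by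
      rw [Complex.norm_exp, theta_re, Real.exp_zero]
    exact ⟨vmat_herm ρ₁ ρ₂ _, vmat_posdef ρ₁ ρ₂ _ hω⟩
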